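/- arXiv:2205.02988 — 3 statements merged into one kernel-verified Lean document; each statement's English description precedes it below -/
import Mathlib

section
/- If t and g are complex numbers satisfying (x - t^2)·g = 1 and t^3/3 - x·t = -y, then g satisfies the cubic equation (9y^2 - 4x^3)·g^3 + 3x·g + 1 = 0. -/
theorem airy_cubic_for_g (x y t g : ℂ)
    (h1 : (x - t ^ 2) * g = 1)
    (h2 : t ^ 3 / 3 - x * t = -y) :
    (9 * y ^ 2 - 4 * x ^ 3) * g ^ 3 + 3 * x * g + 1 = 0 := by
  linear_combination (-(4 * x - t ^ 2) * g * ((x - t ^ 2) * g + 1) - 1) * h1 +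
    9 * (y + x * t - t ^ 3 / 3) * g ^ 3 * h2
end

section
/- Any holomorphic local solution g(x,y) of the cubic equation (9y^2 - 4x^3)·g(x,y)^3 + 3x·g(x,y) + 1 = 0 (on a domain where the equation defines g implicitly with 3(9y^2-4x^3)g^2 + 3x ≠ 0) satisfies the partial differential equation (-∂²/∂x² + x·∂²/∂y²)g = 0. -/
open Complex

lemma slice_hasDerivAt_fst {F : ℂ × ℂ → ℂ} {a b : ℂ} (h : DifferentiableAt ℂ F (a, b)) :
    HasDerivAt (fun x => F (x, b)) (fderiv ℂ F (a, b) (1, 0)) a := by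
  have h2 : HasDerivAt (fun x : ℂ => (x, b)) ((1 : ℂ), (0 : ℂ)) a :=
    (hasDerivAt_id a).prodMk (hasDerivAt_const a b)
  exact h.hasFDerivAt.comp_hasDerivAt a h2

lemma slice_hasDerivAt_snd {F : ℂ × ℂ → ℂ} {a b : ℂ} (h : DifferentiableAt ℂ F (a, b)) :
    HasDerivAt (fun y => F (a, y)) (fderiv ℂ F (a, b) (0, 1)) b := by
  have h2 : HasDerivAt (fun y : ℂ => (a, y)) ((0 : ℂ), (1 : ℂ)) b :=
    (hasDerivAt_const b a).prodMk (hasDerivAt_id b)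
  exact h.hasFDerivAt.comp_hasDerivAt b h2

theorem borel_airy_pde_of_cubic
    (U : Set (ℂ × ℂ)) (hU : IsOpen U) (g : ℂ → ℂ → ℂ)
    (hsmooth : ContDiffOn ℂ ⊤ (fun p : ℂ × ℂ => g p.1 p.2) U)
    (hcubic : ∀ p ∈ U, (9 * p.2 ^ 2 - 4 * p.1 ^ 3) * (g p.1 p.2) ^ 3
        + 3 * p.1 * g p.1 p.2 + 1 = 0)
    (hnd : ∀ p ∈ U, 3 * (9 * p.2 ^ 2 - 4 * p.1 ^ 3) * (g p.1 p.2) ^ 2 + 3 * p.1 ≠ 0) :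
    ∀ p ∈ U,
      - deriv (fun x => deriv (fun x' => g x' p.2) x) p.1
        + p.1 * deriv (fun y => deriv (fun y' => g p.1 y') y) p.2 = 0 := by
  set G : ℂ × ℂ → ℂ := fun p : ℂ × ℂ => g p.1 p.2 with hGdef
  have hsm : ContDiffOn ℂ (⊤ : ℕ∞) G U := hsmooth.of_le le_top
  have hdiffG : ∀ q ∈ U, DifferentiableAt ℂ G q := fun q hq =>
    ((hsm q hq).contDiffAt (hU.mem_nhds hq)).differentiableAt (by simp)
  set Gx : ℂ × ℂ → ℂ := fun q => fderiv ℂ G q ((1 : ℂ), (0 : ℂ)) with hGxdef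
  set Gy : ℂ × ℂ → ℂ := fun q => fderiv ℂ G q ((0 : ℂ), (1 : ℂ)) with hGydef
  have hfd : ContDiffOn ℂ (⊤ : ℕ∞) (fderiv ℂ G) U :=
    hsm.fderiv_of_isOpen hU (by exact_mod_cast le_top)
  have hGxsm : ContDiffOn ℂ (⊤ : ℕ∞) Gx U := hfd.clm_apply contDiffOn_const
  have hGysm : ContDiffOn ℂ (⊤ : ℕ∞) Gy U := hfd.clm_apply contDiffOn_const
  -- first-order partials
  have hx : ∀ q ∈ U, HasDerivAt (fun x => g x q.2) (Gx q) q.1 := by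
    intro q hq
    have := slice_hasDerivAt_fst (F := G) (a := q.1) (b := q.2) (by simpa using hdiffG q hq)
    simpa [hGdef, hGxdef] using this
  have hy : ∀ q ∈ U, HasDerivAt (fun y => g q.1 y) (Gy q) q.2 := by
    intro q hq
    have := slice_hasDerivAt_snd (F := G) (a := q.1) (b := q.2) (by simpa using hdiffG q hq)
    simpa [hGdef, hGydef] using this
  -- first-order implicit differentiation, valid everywhere on U
  have e2 : ∀ q ∈ U, -12 * q.1 ^ 2 * (g q.1 q.2) ^ 3
      + 3 * (9 * q.2 ^ 2 - 4 * q.1 ^ 3) * (g q.1 q.2) ^ 2 * Gx q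
      + 3 * g q.1 q.2 + 3 * q.1 * Gx q = 0 := by
    intro q hq
    have hgq := hx q hq
    have hA : HasDerivAt (fun x : ℂ => 9 * q.2 ^ 2 - 4 * x ^ 3) (-(4 * (3 * q.1 ^ 2))) q.1 := by
      exact ((hasDerivAt_const q.1 (9 * q.2 ^ 2)).sub ((hasDerivAt_pow 3 q.1).const_mul 4)).congr_deriv (by push_cast; ring)
    have hφ : HasDerivAt (fun x => (9 * q.2 ^ 2 - 4 * x ^ 3) * (g x q.2) ^ 3
        + 3 * x * (g x q.2) + 1)
        (-12 * q.1 ^ 2 * (g q.1 q.2) ^ 3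
          + 3 * (9 * q.2 ^ 2 - 4 * q.1 ^ 3) * (g q.1 q.2) ^ 2 * Gx q
          + 3 * g q.1 q.2 + 3 * q.1 * Gx q) q.1 := by
      have h2 := ((hA.mul (hgq.pow 3)).add
        (((hasDerivAt_id q.1).const_mul 3).mul hgq)).add_const 1
      refine h2.congr_deriv ?_
      simp only [id_eq, Pi.pow_apply]
      push_cast
      ring
    have hS : {x : ℂ | (x, q.2) ∈ U} ∈ nhds q.1 :=
      (hU.preimage (by fun_prop : Continuous fun x : ℂ => (x, q.2))).mem_nhds hq
    have hev : (fun x => (9 * q.2 ^ 2 - 4 * x ^ 3) * (g x q.2) ^ 3 + 3 * x * (g x q.2) + 1)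
        =ᶠ[nhds q.1] fun _ => (0 : ℂ) :=
      Filter.eventuallyEq_of_mem hS (fun x hxm => hcubic (x, q.2) hxm)
    exact (hφ.congr_of_eventuallyEq hev.symm).unique (hasDerivAt_const q.1 0)
  have e3 : ∀ q ∈ U, 18 * q.2 * (g q.1 q.2) ^ 3
      + 3 * (9 * q.2 ^ 2 - 4 * q.1 ^ 3) * (g q.1 q.2) ^ 2 * Gy q
      + 3 * q.1 * Gy q = 0 := by
    intro q hq
    have hgq := hy q hq
    have hA : HasDerivAt (fun y : ℂ => 9 * y ^ 2 - 4 * q.1 ^ 3) (9 * (2 * q.2)) q.2 := by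
      simpa using ((hasDerivAt_pow 2 q.2).const_mul 9).sub_const (4 * q.1 ^ 3)
    have hφ : HasDerivAt (fun y => (9 * y ^ 2 - 4 * q.1 ^ 3) * (g q.1 y) ^ 3
        + 3 * q.1 * (g q.1 y) + 1)
        (18 * q.2 * (g q.1 q.2) ^ 3
          + 3 * (9 * q.2 ^ 2 - 4 * q.1 ^ 3) * (g q.1 q.2) ^ 2 * Gy q
          + 3 * q.1 * Gy q) q.2 := by
      have h2 := ((hA.mul (hgq.pow 3)).add (hgq.const_mul (3 * q.1))).add_const 1
      refine h2.congr_deriv ?_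
      simp only [Pi.pow_apply]
      push_cast
      ring
    have hS : {y : ℂ | (q.1, y) ∈ U} ∈ nhds q.2 :=
      (hU.preimage (by fun_prop : Continuous fun y : ℂ => (q.1, y))).mem_nhds hq
    have hev : (fun y => (9 * y ^ 2 - 4 * q.1 ^ 3) * (g q.1 y) ^ 3 + 3 * q.1 * (g q.1 y) + 1)
        =ᶠ[nhds q.2] fun _ => (0 : ℂ) :=
      Filter.eventuallyEq_of_mem hS (fun y hym => hcubic (q.1, y) hym)
    exact (hφ.congr_of_eventuallyEq hev.symm).unique (hasDerivAt_const q.2 0)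
  rintro ⟨a, b⟩ hp
  have hga : HasDerivAt (fun x => g x b) (Gx (a, b)) a := hx (a, b) hp
  have hgb : HasDerivAt (fun y => g a y) (Gy (a, b)) b := hy (a, b) hp
  have hdGx : DifferentiableAt ℂ Gx (a, b) :=
    ((hGxsm _ hp).contDiffAt (hU.mem_nhds hp)).differentiableAt (by simp)
  have hdGy : DifferentiableAt ℂ Gy (a, b) :=
    ((hGysm _ hp).contDiffAt (hU.mem_nhds hp)).differentiableAt (by simp)
  set gv : ℂ := g a b with hgv
  set gx : ℂ := Gx (a, b) with hgx
  set gy : ℂ := Gy (a, b) with hgy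
  set gxx : ℂ := fderiv ℂ Gx (a, b) ((1 : ℂ), (0 : ℂ)) with hgxx
  set gyy : ℂ := fderiv ℂ Gy (a, b) ((0 : ℂ), (1 : ℂ)) with hgyy
  have hxx : HasDerivAt (fun x => Gx (x, b)) gxx a := slice_hasDerivAt_fst hdGx
  have hyy : HasDerivAt (fun y => Gy (a, y)) gyy b := slice_hasDerivAt_snd hdGy
  have hSx : {x : ℂ | (x, b) ∈ U} ∈ nhds a :=
    (hU.preimage (by fun_prop : Continuous fun x : ℂ => (x, b))).mem_nhds hp
  have hSy : {y : ℂ | (a, y) ∈ U} ∈ nhds b :=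
    (hU.preimage (by fun_prop : Continuous fun y : ℂ => (a, y))).mem_nhds hp
  -- second-order identity in x
  have e4 : -24 * a * gv ^ 3 - 72 * a ^ 2 * gv ^ 2 * gx
      + 6 * (9 * b ^ 2 - 4 * a ^ 3) * gv * gx ^ 2 + 6 * gx
      + 3 * (9 * b ^ 2 - 4 * a ^ 3) * gv ^ 2 * gxx + 3 * a * gxx = 0 := by
    have hA : HasDerivAt (fun x : ℂ => 9 * b ^ 2 - 4 * x ^ 3) (-(4 * (3 * a ^ 2))) a := by
      exact ((hasDerivAt_const a (9 * b ^ 2)).sub ((hasDerivAt_pow 3 a).const_mul 4)).congr_deriv (by push_cast; ring)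
    have hψ : HasDerivAt (fun x => -12 * x ^ 2 * (g x b) ^ 3
        + 3 * (9 * b ^ 2 - 4 * x ^ 3) * ((g x b) ^ 2 * Gx (x, b))
        + (3 * (g x b) + 3 * x * Gx (x, b)))
        (-24 * a * gv ^ 3 - 72 * a ^ 2 * gv ^ 2 * gx
          + 6 * (9 * b ^ 2 - 4 * a ^ 3) * gv * gx ^ 2 + 6 * gx
          + 3 * (9 * b ^ 2 - 4 * a ^ 3) * gv ^ 2 * gxx + 3 * a * gxx) a := by
      have h2 := ((((hasDerivAt_pow 2 a).const_mul (-12)).mul (hga.pow 3)).add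
        ((hA.const_mul 3).mul ((hga.pow 2).mul hxx))).add
        ((hga.const_mul 3).add (((hasDerivAt_id a).const_mul 3).mul hxx))
      refine h2.congr_deriv ?_
      simp only [id_eq, Pi.pow_apply, Pi.mul_apply, hgv, hgx]
      push_cast
      ring
    have hev : (fun x => -12 * x ^ 2 * (g x b) ^ 3
        + 3 * (9 * b ^ 2 - 4 * x ^ 3) * ((g x b) ^ 2 * Gx (x, b))
        + (3 * (g x b) + 3 * x * Gx (x, b))) =ᶠ[nhds a] fun _ => (0 : ℂ) :=
      Filter.eventuallyEq_of_mem hSx (fun x hxm => by linear_combination e2 (x, b) hxm)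
    exact (hψ.congr_of_eventuallyEq hev.symm).unique (hasDerivAt_const a 0)
  -- second-order identity in y
  have e5 : 18 * gv ^ 3 + 108 * b * gv ^ 2 * gy
      + 6 * (9 * b ^ 2 - 4 * a ^ 3) * gv * gy ^ 2
      + 3 * (9 * b ^ 2 - 4 * a ^ 3) * gv ^ 2 * gyy + 3 * a * gyy = 0 := by
    have hA : HasDerivAt (fun y : ℂ => 9 * y ^ 2 - 4 * a ^ 3) (9 * (2 * b)) b := by
      simpa using ((hasDerivAt_pow 2 b).const_mul 9).sub_const (4 * a ^ 3)
    have hχ : HasDerivAt (fun y => 18 * y * (g a y) ^ 3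
        + 3 * (9 * y ^ 2 - 4 * a ^ 3) * ((g a y) ^ 2 * Gy (a, y))
        + 3 * a * Gy (a, y))
        (18 * gv ^ 3 + 108 * b * gv ^ 2 * gy
          + 6 * (9 * b ^ 2 - 4 * a ^ 3) * gv * gy ^ 2
          + 3 * (9 * b ^ 2 - 4 * a ^ 3) * gv ^ 2 * gyy + 3 * a * gyy) b := by
      have h2 := ((((hasDerivAt_id b).const_mul 18).mul (hgb.pow 3)).add
        ((hA.const_mul 3).mul ((hgb.pow 2).mul hyy))).add
        (hyy.const_mul (3 * a))
      refine h2.congr_deriv ?_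
      simp only [id_eq, Pi.pow_apply, Pi.mul_apply, hgv, hgy]
      push_cast
      ring
    have hev : (fun y => 18 * y * (g a y) ^ 3
        + 3 * (9 * y ^ 2 - 4 * a ^ 3) * ((g a y) ^ 2 * Gy (a, y))
        + 3 * a * Gy (a, y)) =ᶠ[nhds b] fun _ => (0 : ℂ) :=
      Filter.eventuallyEq_of_mem hSy (fun y hym => by linear_combination e3 (a, y) hym)
    exact (hχ.congr_of_eventuallyEq hev.symm).unique (hasDerivAt_const b 0)
  -- rewrite the goal derivatives
  have h1 : deriv (fun x => deriv (fun x' => g x' b) x) a = gxx := by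
    have hev1 : (fun x => deriv (fun x' => g x' b) x) =ᶠ[nhds a] (fun x => Gx (x, b)) :=
      Filter.eventuallyEq_of_mem hSx (fun x hxm => (hx (x, b) hxm).deriv)
    rw [hev1.deriv_eq]
    exact hxx.deriv
  have h2 : deriv (fun y => deriv (fun y' => g a y') y) b = gyy := by
    have hev2 : (fun y => deriv (fun y' => g a y') y) =ᶠ[nhds b] (fun y => Gy (a, y)) :=
      Filter.eventuallyEq_of_mem hSy (fun y hym => (hy (a, y) hym).deriv)
    rw [hev2.deriv_eq]
    exact hyy.deriv
  have e1p := hcubic (a, b) hp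
  have e2p := e2 (a, b) hp
  have e3p := e3 (a, b) hp
  have hD := hnd (a, b) hp
  simp only at e1p e2p e3p hD
  rw [← hgv] at e1p e2p e3p hD
  rw [← hgx] at e2p
  rw [← hgy] at e3p
  show - deriv (fun x => deriv (fun x' => g x' b) x) a
      + a * deriv (fun y => deriv (fun y' => g a y') y) b = 0
  rw [h1, h2]
  have key : (3 * (9 * b ^ 2 - 4 * a ^ 3) * gv ^ 2 + 3 * a) ^ 3 * (-gxx + a * gyy) = 0 := by
    linear_combination
      (54 * a * gv * ((9 * b ^ 2 - 4 * a ^ 3) * gv ^ 3 + 3 * a * gv - 1)) * e1p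
      + (-72 * a ^ 2 * gv ^ 2 * (3 * (9 * b ^ 2 - 4 * a ^ 3) * gv ^ 2 + 3 * a)
          + 6 * (9 * b ^ 2 - 4 * a ^ 3) * gv
            * ((3 * (9 * b ^ 2 - 4 * a ^ 3) * gv ^ 2 + 3 * a) * gx + (12 * a ^ 2 * gv ^ 3 - 3 * gv))
          + 6 * (3 * (9 * b ^ 2 - 4 * a ^ 3) * gv ^ 2 + 3 * a)) * e2p
      - a * (108 * b * gv ^ 2 * (3 * (9 * b ^ 2 - 4 * a ^ 3) * gv ^ 2 + 3 * a)
          + 6 * (9 * b ^ 2 - 4 * a ^ 3) * gv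
            * ((3 * (9 * b ^ 2 - 4 * a ^ 3) * gv ^ 2 + 3 * a) * gy - 18 * b * gv ^ 3)) * e3p
      - (3 * (9 * b ^ 2 - 4 * a ^ 3) * gv ^ 2 + 3 * a) ^ 2 * e4
      + a * (3 * (9 * b ^ 2 - 4 * a ^ 3) * gv ^ 2 + 3 * a) ^ 2 * e5
  rcases mul_eq_zero.mp key with h | h
  · exact absurd h (pow_ne_zero 3 hD)
  · exact h
end

section
/- For the formal power series solution S = Σ_{j≥-1} η^{-j} S_j of the Riccati equation S' + S² = η²x with S_{-1} = x^{1/2}, the even part S_even = Σ_{j≥0} η^{-2j} S_{2j} satisfies S_even = -(1/2)·d/dx(log S_odd), i.e., 2·S_even·S_odd + d/dx(S_odd) = 0, where S_odd = Σ_{j≥-1} η^{-2j-1} S_{2j+1}. -/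
open Real

/-- `A n` stands for the WKB coefficient `S_{n-1}` of the Riccati equation
`S' + S² = η² x` for the Airy equation, so `A 0 = S₋₁ = √x` and the recursion
`S_{j+1} = -(1/(2S₋₁))(S_j' + ∑_{k=0}^{j} S_k S_{j-k})`.  The conclusion is the
coefficientwise (in powers of `η⁻¹`) form of `2·S_even·S_odd + (S_odd)' = 0`,
i.e. `S_even = -(1/2)·(log S_odd)'`. -/
theorem airy_Seven_eq_log_deriv_Sodd
    (A : ℕ → ℝ → ℝ)
    (hA0 : ∀ x : ℝ, 0 < x → A 0 x = Real.sqrt x)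
    (hrec : ∀ (n : ℕ) (x : ℝ), 0 < x →
      A (n + 1) x = -(1 / (2 * A 0 x)) *
        (deriv (A n) x + ∑ k ∈ Finset.range n, A (k + 1) x * A (n - k) x)) :
    ∀ (m : ℕ) (x : ℝ), 0 < x →
      deriv (A (2 * m)) x
        + 2 * ∑ j ∈ Finset.range (m + 1), A (2 * j + 1) x * A (2 * m - 2 * j) x = 0 := by
  intro m x hx
  have hA0x : A 0 x = Real.sqrt x := hA0 x hx
  have hA0ne : A 0 x ≠ 0 := by
    rw [hA0x]
    exact ne_of_gt (Real.sqrt_pos.mpr hx)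
  -- the recursion at n = 2m, rewritten
  have h := hrec (2 * m) x hx
  have hD : deriv (A (2 * m)) x
      = -(2 * A 0 x * A (2 * m + 1) x)
        - ∑ k ∈ Finset.range (2 * m), A (k + 1) x * A (2 * m - k) x := by
    field_simp at h
    linarith
  -- pairing of a sum over range (2n)
  have hpair : ∀ (f : ℕ → ℝ) (n : ℕ),
      ∑ k ∈ Finset.range (2 * n), f k
        = ∑ j ∈ Finset.range n, (f (2 * j) + f (2 * j + 1)) := by
    intro f n
    induction n with
    | zero => simp
    | succ n ih =>
      have h2 : 2 * (n + 1) = (2 * n) + 1 + 1 := by ring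
      rw [Finset.sum_range_succ, ← ih, h2, Finset.sum_range_succ,
        Finset.sum_range_succ]
      ring
  -- the convolution sum equals twice the even-index sum
  have hconv : ∑ k ∈ Finset.range (2 * m), A (k + 1) x * A (2 * m - k) x
      = 2 * ∑ j ∈ Finset.range m, A (2 * j + 1) x * A (2 * m - 2 * j) x := by
    rw [hpair (fun k => A (k + 1) x * A (2 * m - k) x) m]
    have hrefl : ∑ j ∈ Finset.range m, A (2 * j + 1 + 1) x * A (2 * m - (2 * j + 1)) x
        = ∑ j ∈ Finset.range m, A (2 * j + 1) x * A (2 * m - 2 * j) x := by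
      rw [← Finset.sum_range_reflect]
      apply Finset.sum_congr rfl
      intro j hj
      have hjm : j < m := Finset.mem_range.mp hj
      have h1 : 2 * (m - 1 - j) + 1 + 1 = 2 * m - 2 * j := by omega
      have h2 : 2 * m - (2 * (m - 1 - j) + 1) = 2 * j + 1 := by omega
      rw [h1, h2, mul_comm]
    simp only [Finset.sum_add_distrib, hrefl]
    ring
  rw [hD, hconv, Finset.sum_range_succ]
  have hm : 2 * m - 2 * m = 0 := by omega
  rw [hm]
  ring
end
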